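/- Let f₁,…,f₁₀ be the ten quintics of the classifying map, in the stated order. For all a, x, y, z ∈ ℂ, regard each fᵢ(1, a, tx, ty, tz) as a polynomial in t. Then its constant coefficient is 0 and its coefficient of t equals a²·cᵢ, where (c₁,…,c₁₀) = (0, 0, 0, 0, 0, x, 0, y, 0, z). Hence for a ≠ 0, the limit as t→0 of Φ(1 : a : tx : ty : tz) is the point (0:0:0:0:0:x:0:y:0:z) ∈ ℙ⁹, independent of a; so the exceptional divisor over the line {(s:t:0:0:0)} is contracted by Φ to a plane in ℙ⁹. -/
import Mathlib


/-- The ten quintics `f₁,…,f₁₀` giving the classifying map `Φ : ℙ⁴ ⇢ ℙ⁹`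
(indices 0-based: `v 0 = x₁, …, v 4 = x₅`). -/
def quintics {R : Type*} [CommRing R] (v : Fin 5 → R) : Fin 10 → R :=
  ![v 0 * (v 1 ^ 2 - v 2 ^ 2) * (v 3 ^ 2 - v 4 ^ 2),
    v 0 * (v 1 ^ 2 - v 4 ^ 2) * (v 2 ^ 2 - v 3 ^ 2),
    v 1 * (v 0 ^ 2 - v 2 ^ 2) * (v 3 ^ 2 - v 4 ^ 2),
    v 1 * (v 0 ^ 2 - v 3 ^ 2) * (v 2 ^ 2 - v 4 ^ 2),
    v 2 * (v 0 ^ 2 - v 1 ^ 2) * (v 3 ^ 2 - v 4 ^ 2),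
    v 2 * (v 0 ^ 2 - v 3 ^ 2) * (v 1 ^ 2 - v 4 ^ 2),
    v 3 * (v 0 ^ 2 - v 1 ^ 2) * (v 2 ^ 2 - v 4 ^ 2),
    v 3 * (v 0 ^ 2 - v 2 ^ 2) * (v 1 ^ 2 - v 4 ^ 2),
    v 4 * (v 0 ^ 2 - v 1 ^ 2) * (v 2 ^ 2 - v 3 ^ 2),
    v 4 * (v 0 ^ 2 - v 3 ^ 2) * (v 1 ^ 2 - v 2 ^ 2)]

open Polynomial

/-- Near the line `{(s:t:0:0:0)}`: each `fᵢ(1, a, tx, ty, tz)`, as a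
polynomial in `t`, has constant coefficient `0` and `t`-coefficient `a²·cᵢ`
with `c = (0,0,0,0,0,x,0,y,0,z)`; hence for `a ≠ 0` the limit as `t → 0` of
`Φ(1:a:tx:ty:tz)` is `(0:0:0:0:0:x:0:y:0:z)`, independent of `a`. -/

private lemma key (p : ℂ[X]) (c1 c2 c3 c4 c5 : ℂ)
    (h : p = C c1 * X + C c2 * X ^ 2 + C c3 * X ^ 3 + C c4 * X ^ 4 + C c5 * X ^ 5) :
    p.coeff 0 = 0 ∧ p.coeff 1 = c1 := by
  subst h
  constructor <;> simp

theorem contraction_over_line_m (a x y z : ℂ) (i : Fin 10) :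
    (quintics ![1, C a, C x * X, C y * X, C z * X] i).coeff 0 = 0 ∧
    (quintics ![1, C a, C x * X, C y * X, C z * X] i).coeff 1 =
      a ^ 2 * (![0, 0, 0, 0, 0, x, 0, y, 0, z] i) := by
  fin_cases i
  case _ => -- i = 0
    refine (key _ (0) (a^2*(y^2-z^2)) (0) (-(x^2*(y^2-z^2))) (0) ?_).imp id
      (fun h => by rw [h]; show _ = a ^ 2 * (0 : ℂ); ring)
    show (1:ℂ[X]) * ((C a) ^ 2 - (C x * X) ^ 2) * ((C y * X) ^ 2 - (C z * X) ^ 2) = _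
    simp only [map_mul, map_pow, map_sub, map_add, map_neg, map_one, map_ofNat, map_zero,
      mul_zero]
    ring
  case _ => -- i = 1
    refine (key _ (0) (a^2*(x^2-y^2)) (0) (-(z^2*(x^2-y^2))) (0) ?_).imp id
      (fun h => by rw [h]; show _ = a ^ 2 * (0 : ℂ); ring)
    show (1:ℂ[X]) * ((C a) ^ 2 - (C z * X) ^ 2) * ((C x * X) ^ 2 - (C y * X) ^ 2) = _
    simp only [map_mul, map_pow, map_sub, map_add, map_neg, map_one, map_ofNat, map_zero,
      mul_zero]
    ring
  case _ => -- i = 2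
    refine (key _ (0) (a*(y^2-z^2)) (0) (-(a*x^2*(y^2-z^2))) (0) ?_).imp id
      (fun h => by rw [h]; show _ = a ^ 2 * (0 : ℂ); ring)
    show C a * (((1:ℂ[X])) ^ 2 - (C x * X) ^ 2) * ((C y * X) ^ 2 - (C z * X) ^ 2) = _
    simp only [map_mul, map_pow, map_sub, map_add, map_neg, map_one, map_ofNat, map_zero,
      mul_zero]
    ring
  case _ => -- i = 3
    refine (key _ (0) (a*(x^2-z^2)) (0) (-(a*y^2*(x^2-z^2))) (0) ?_).imp id
      (fun h => by rw [h]; show _ = a ^ 2 * (0 : ℂ); ring)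
    show C a * (((1:ℂ[X])) ^ 2 - (C y * X) ^ 2) * ((C x * X) ^ 2 - (C z * X) ^ 2) = _
    simp only [map_mul, map_pow, map_sub, map_add, map_neg, map_one, map_ofNat, map_zero,
      mul_zero]
    ring
  case _ => -- i = 4
    refine (key _ (0) (0) (x*(1-a^2)*(y^2-z^2)) (0) (0) ?_).imp id
      (fun h => by rw [h]; show _ = a ^ 2 * (0 : ℂ); ring)
    show C x * X * (((1:ℂ[X])) ^ 2 - (C a) ^ 2) * ((C y * X) ^ 2 - (C z * X) ^ 2) = _
    simp only [map_mul, map_pow, map_sub, map_add, map_neg, map_one, map_ofNat, map_zero,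
      mul_zero]
    ring
  case _ => -- i = 5
    refine (key _ (a^2*x) (0) (-(x*y^2*a^2)-x*z^2) (0) (x*y^2*z^2) ?_).imp id
      (fun h => by rw [h]; show _ = a ^ 2 * (x : ℂ); ring)
    show C x * X * (((1:ℂ[X])) ^ 2 - (C y * X) ^ 2) * ((C a) ^ 2 - (C z * X) ^ 2) = _
    simp only [map_mul, map_pow, map_sub, map_add, map_neg, map_one, map_ofNat, map_zero,
      mul_zero]
    ring
  case _ => -- i = 6
    refine (key _ (0) (0) (y*(1-a^2)*(x^2-z^2)) (0) (0) ?_).imp id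
      (fun h => by rw [h]; show _ = a ^ 2 * (0 : ℂ); ring)
    show C y * X * (((1:ℂ[X])) ^ 2 - (C a) ^ 2) * ((C x * X) ^ 2 - (C z * X) ^ 2) = _
    simp only [map_mul, map_pow, map_sub, map_add, map_neg, map_one, map_ofNat, map_zero,
      mul_zero]
    ring
  case _ => -- i = 7
    refine (key _ (a^2*y) (0) (-(y*x^2*a^2)-y*z^2) (0) (y*x^2*z^2) ?_).imp id
      (fun h => by rw [h]; show _ = a ^ 2 * (y : ℂ); ring)
    show C y * X * (((1:ℂ[X])) ^ 2 - (C x * X) ^ 2) * ((C a) ^ 2 - (C z * X) ^ 2) = _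
    simp only [map_mul, map_pow, map_sub, map_add, map_neg, map_one, map_ofNat, map_zero,
      mul_zero]
    ring
  case _ => -- i = 8
    refine (key _ (0) (0) (z*(1-a^2)*(x^2-y^2)) (0) (0) ?_).imp id
      (fun h => by rw [h]; show _ = a ^ 2 * (0 : ℂ); ring)
    show C z * X * (((1:ℂ[X])) ^ 2 - (C a) ^ 2) * ((C x * X) ^ 2 - (C y * X) ^ 2) = _
    simp only [map_mul, map_pow, map_sub, map_add, map_neg, map_one, map_ofNat, map_zero,
      mul_zero]
    ring
  case _ => -- i = 9
    refine (key _ (a^2*z) (0) (-(z*y^2*a^2)-z*x^2) (0) (z*y^2*x^2) ?_).imp id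
      (fun h => by rw [h]; show _ = a ^ 2 * (z : ℂ); ring)
    show C z * X * (((1:ℂ[X])) ^ 2 - (C y * X) ^ 2) * ((C a) ^ 2 - (C x * X) ^ 2) = _
    simp only [map_mul, map_pow, map_sub, map_add, map_neg, map_one, map_ofNat, map_zero,
      mul_zero]
    ring
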